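/- For every integer d ≥ 2, every integer k ≥ 0, every positive weight vector w, and every n ≥ 0: ‖B_{n+1}^{n+k+1}‖_w ≤ (‖B_n^{n+k}‖_w)^d and |Λ_{n+1}^{n+k+1}| = d·|Λ_n^{n+k}|; consequently the sequence a_n = log‖B_n^{n+k}‖_w / |Λ_n^{n+k}| is non-increasing in n and converges. -/

import Mathlib

open Filter Topology

/-- Assumption (A): `E` has nonnegative entries with all column sums and row sums positive. -/
def AssumptionA {A : Type*} [Fintype A] (E : Matrix A A ℝ) : Prop :=
  (∀ a b, 0 ≤ E a b) ∧ (∀ b, 0 < ∑ a, E a b) ∧ (∀ a, 0 < ∑ b, E a b)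

/-- The hom tree-shift `X_E^{×d}` on the rooted `d`-tree, whose vertices are the finite
words over `Fin d` (the empty word is the root, and the children of `g` are `g ++ [i]`). -/
def treeX {A : Type*} (d : ℕ) (E : Matrix A A ℝ) : Set (List (Fin d) → A) :=
  {t | ∀ g : List (Fin d), ∀ i : Fin d, 0 < E (t (g ++ [i])) (t g)}

/-- `|Λ_n^m| = Σ_{i=n}^m d^i`, the number of vertices of the `d`-tree with depth
between `n` and `m`. -/
def latCard (d n m : ℕ) : ℕ := ∑ i ∈ Finset.Icc n m, d ^ i

/-- The blocks `B_n^m`: restrictions of configurations of `X_E^{×d}` to `Λ_n^m`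
(realized as total functions pinned to `default` outside `Λ_n^m`). -/
def blockSet {A : Type*} [Inhabited A] (d : ℕ) (E : Matrix A A ℝ) (n m : ℕ) :
    Set (List (Fin d) → A) :=
  {u | ∃ t ∈ treeX d E,
        (∀ g : List (Fin d), n ≤ g.length → g.length ≤ m → u g = t g) ∧
        (∀ g : List (Fin d), g.length < n ∨ m < g.length → u g = default)}

/-- The weight of a block on `Λ_n^m`:
`∏_{g∈Δ_n} w_{u_g} · ∏_{g∈Λ_n^{m−1}} ∏_{i=1}^d E_{u_{gi}, u_g}`. -/
noncomputable def blockWeight {A : Type*} (d : ℕ) (E : Matrix A A ℝ) (w : A → ℝ)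
    (n m : ℕ) (u : List (Fin d) → A) : ℝ :=
  (∏ᶠ (g : List (Fin d)) (_ : g.length = n), w (u g)) *
    ∏ᶠ (g : List (Fin d)) (_ : n ≤ g.length ∧ g.length < m),
      ∏ i : Fin d, E (u (g ++ [i])) (u g)

/-- The partition function `‖B_n^m‖_w`. -/
noncomputable def partFn {A : Type*} [Inhabited A] (d : ℕ) (E : Matrix A A ℝ)
    (w : A → ℝ) (n m : ℕ) : ℝ :=
  ∑ᶠ u ∈ blockSet d E n m, blockWeight d E w n m u

section WS

variable {d : ℕ}

/-- The finset of words over `Fin d` whose length lies in the finset `s`. -/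
noncomputable def WS (d : ℕ) (s : Finset ℕ) : Finset (List (Fin d)) :=
  Set.Finite.toFinset (s := {g : List (Fin d) | g.length ∈ s})
    (Set.Finite.subset (List.finite_length_le (Fin d) (s.sup id))
      (fun _ hg => Finset.le_sup (f := id) hg))

lemma mem_WS {s : Finset ℕ} {g : List (Fin d)} : g ∈ WS d s ↔ g.length ∈ s :=
  Set.Finite.mem_toFinset _

lemma prod_WS_shift {M : Type*} [CommMonoid M] (hd : 0 < d) (s : Finset ℕ)
    (f : List (Fin d) → M) :
    ∏ g ∈ WS d (s.image (· + 1)), f g = ∏ i : Fin d, ∏ g ∈ WS d s, f (i :: g) := by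
  haveI : Inhabited (Fin d) := ⟨⟨0, hd⟩⟩
  rw [← Finset.prod_product' (s := (Finset.univ : Finset (Fin d))) (t := WS d s)
    (f := fun i g => f (i :: g))]
  have hne : ∀ h ∈ WS d (s.image (· + 1)), ∃ a t, h = a :: t ∧ t.length ∈ s := by
    intro h hh
    rw [mem_WS, Finset.mem_image] at hh
    obtain ⟨l, hl, hlen⟩ := hh
    obtain ⟨a, t, rfl⟩ := List.exists_cons_of_ne_nil
      (by intro he; rw [he] at hlen; simp at hlen : h ≠ [])
    have : t.length = l := by simpa using hlen.symm
    exact ⟨a, t, rfl, this ▸ hl⟩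
  refine Finset.prod_nbij' (fun h => (h.headI, h.tail)) (fun p => p.1 :: p.2) ?_ ?_ ?_ ?_ ?_
  · intro h hh
    obtain ⟨a, t, rfl, ht⟩ := hne h hh
    simp [Finset.mem_product, mem_WS, ht]
  · intro p hp
    rw [Finset.mem_product, mem_WS] at hp
    rw [mem_WS, Finset.mem_image]
    exact ⟨p.2.length, hp.2, by simp⟩
  · intro h hh
    obtain ⟨a, t, rfl, _⟩ := hne h hh
    simp
  · intro p _; simp
  · intro h hh
    obtain ⟨a, t, rfl, _⟩ := hne h hh
    simp

lemma card_WS_shift (hd : 2 ≤ d) (s : Finset ℕ) :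
    (WS d (s.image (· + 1))).card = d * (WS d s).card := by
  have h := prod_WS_shift (M := ℕ) (by omega : 0 < d) s (fun _ => 2)
  simp only [Finset.prod_const] at h
  rw [← pow_mul] at h
  have h2 := Nat.pow_right_injective (le_refl 2) h
  rw [h2, Finset.card_univ, Fintype.card_fin, mul_comm]

lemma card_WS (hd : 2 ≤ d) (s : Finset ℕ) : (WS d s).card = ∑ i ∈ s, d ^ i := by
  have hsingle : ∀ n : ℕ, (WS d ({n} : Finset ℕ)).card = d ^ n := by
    intro n
    induction n with
    | zero =>
      have : WS d ({0} : Finset ℕ) = {([] : List (Fin d))} := by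
        ext g; simp [mem_WS, List.length_eq_zero_iff]
      rw [this]; simp
    | succ n ih =>
      have : ({n + 1} : Finset ℕ) = ({n} : Finset ℕ).image (· + 1) := by simp
      rw [this, card_WS_shift hd, ih, pow_succ, mul_comm]
  have : WS d s = s.biUnion (fun i => WS d {i}) := by
    ext g; simp [mem_WS]
  rw [this, Finset.card_biUnion, Finset.sum_congr rfl (fun i _ => hsingle i)]
  intro i _ j _ hij
  simp only [Function.onFun]; rw [Finset.disjoint_left]
  intro g hgi hgj
  rw [mem_WS, Finset.mem_singleton] at hgi hgj
  exact hij (hgi ▸ hgj)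

end WS

section Main

variable {A : Type*} [Fintype A] [Inhabited A] {d : ℕ}

lemma blockWeight_eq (E : Matrix A A ℝ) (w : A → ℝ) (n m : ℕ) (u : List (Fin d) → A) :
    blockWeight d E w n m u =
      (∏ g ∈ WS d {n}, w (u g)) *
        ∏ g ∈ WS d (Finset.Ico n m), ∏ i : Fin d, E (u (g ++ [i])) (u g) := by
  unfold blockWeight
  congr 1
  · have h1 : {g : List (Fin d) | g.length = n} = ↑(WS d {n}) := by
      ext g; simp [mem_WS]
    calc ∏ᶠ (g : List (Fin d)) (_ : g.length = n), w (u g)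
        = ∏ᶠ g ∈ {g : List (Fin d) | g.length = n}, w (u g) := rfl
      _ = _ := by rw [h1, finprod_mem_coe_finset]
  · have h1 : {g : List (Fin d) | n ≤ g.length ∧ g.length < m} = ↑(WS d (Finset.Ico n m)) := by
      ext g; simp [mem_WS]
    calc ∏ᶠ (g : List (Fin d)) (_ : n ≤ g.length ∧ g.length < m),
          ∏ i : Fin d, E (u (g ++ [i])) (u g)
        = ∏ᶠ g ∈ {g : List (Fin d) | n ≤ g.length ∧ g.length < m},
          ∏ i : Fin d, E (u (g ++ [i])) (u g) := rfl
      _ = _ := by rw [h1, finprod_mem_coe_finset]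

lemma blockSet_finite (E : Matrix A A ℝ) (n m : ℕ) : (blockSet d E n m).Finite := by
  apply Set.Finite.of_finite_image
    (f := fun u (g : (WS d (Finset.Icc n m) : Finset (List (Fin d)))) => u g)
  · exact Set.toFinite _
  · intro u hu v hv h
    funext g
    by_cases hg : n ≤ g.length ∧ g.length ≤ m
    · have hmem : g ∈ WS d (Finset.Icc n m) := by
        rw [mem_WS, Finset.mem_Icc]; exact hg
      exact congrFun h ⟨g, hmem⟩
    · obtain ⟨t, _, _, hu2⟩ := hu
      obtain ⟨t', _, _, hv2⟩ := hv
      rw [hu2 g (by omega), hv2 g (by omega)]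

lemma partFn_eq (E : Matrix A A ℝ) (w : A → ℝ) (n m : ℕ) :
    partFn d E w n m =
      ∑ u ∈ (blockSet_finite E n m).toFinset, blockWeight d E w n m u := by
  exact finsum_mem_eq_finite_toFinset_sum _ (blockSet_finite E n m)

end Main

section Main2

variable {A : Type*} [Fintype A] [Inhabited A] {d : ℕ}

/-- Restriction of a block on `Λ_{n+1}^{m+1}` to the subtree rooted at the child `i`. -/
def subBlock (d : ℕ) [Inhabited A] (n m : ℕ) (i : Fin d) (u : List (Fin d) → A) :
    List (Fin d) → A :=
  fun g => if n ≤ g.length ∧ g.length ≤ m then u (i :: g) else default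

lemma subBlock_mem {E : Matrix A A ℝ} {n m : ℕ} {u : List (Fin d) → A}
    (hu : u ∈ blockSet d E (n + 1) (m + 1)) (i : Fin d) :
    subBlock d n m i u ∈ blockSet d E n m := by
  obtain ⟨t, ht, h1, _⟩ := hu
  refine ⟨fun g => t (i :: g), ?_, ?_, ?_⟩
  · intro g j
    have := ht (i :: g) j
    simpa [List.cons_append] using this
  · intro g hg1 hg2
    rw [subBlock, if_pos ⟨hg1, hg2⟩]
    exact h1 (i :: g) (by simpa using hg1) (by simpa using hg2)
  · intro g hg
    rw [subBlock, if_neg (by omega)]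

lemma subBlock_injOn {E : Matrix A A ℝ} {n m : ℕ} {u v : List (Fin d) → A}
    (hu : u ∈ blockSet d E (n + 1) (m + 1)) (hv : v ∈ blockSet d E (n + 1) (m + 1))
    (h : ∀ i : Fin d, subBlock d n m i u = subBlock d n m i v) : u = v := by
  funext g
  by_cases hg : n + 1 ≤ g.length ∧ g.length ≤ m + 1
  · obtain ⟨i, g', rfl⟩ := List.exists_cons_of_ne_nil
      (by intro he; rw [he] at hg; simp at hg : g ≠ [])
    have hlen : n ≤ g'.length ∧ g'.length ≤ m := by
      simp only [List.length_cons] at hg; omega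
    have := congrFun (h i) g'
    rwa [subBlock, subBlock, if_pos hlen, if_pos hlen] at this
  · obtain ⟨t, _, _, hu2⟩ := hu
    obtain ⟨t', _, _, hv2⟩ := hv
    rw [hu2 g (by omega), hv2 g (by omega)]

lemma blockWeight_subBlock (hd : 0 < d) (E : Matrix A A ℝ) (w : A → ℝ) {n m : ℕ}
    (hnm : n ≤ m) (u : List (Fin d) → A) :
    blockWeight d E w (n + 1) (m + 1) u =
      ∏ i : Fin d, blockWeight d E w n m (subBlock d n m i u) := by
  rw [blockWeight_eq]
  have hrw : ∀ i : Fin d, blockWeight d E w n m (subBlock d n m i u) =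
      (∏ g ∈ WS d {n}, w (u (i :: g))) *
        ∏ g ∈ WS d (Finset.Ico n m), ∏ j : Fin d, E (u ((i :: g) ++ [j])) (u (i :: g)) := by
    intro i
    rw [blockWeight_eq]
    congr 1
    · refine Finset.prod_congr rfl fun g hg => ?_
      rw [mem_WS, Finset.mem_singleton] at hg
      rw [subBlock, if_pos ⟨le_of_eq hg.symm, by omega⟩]
    · refine Finset.prod_congr rfl fun g hg => ?_
      rw [mem_WS, Finset.mem_Ico] at hg
      refine Finset.prod_congr rfl fun j _ => ?_
      rw [subBlock, subBlock, if_pos (by simp only [List.length_append, List.length_cons, List.length_nil]; omega), if_pos ⟨hg.1, by omega⟩, List.cons_append]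
  simp only [hrw]
  rw [Finset.prod_mul_distrib]
  congr 1
  · have h1 : ({n + 1} : Finset ℕ) = ({n} : Finset ℕ).image (· + 1) := by simp
    rw [h1, prod_WS_shift hd]
  · have h1 : Finset.Ico (n + 1) (m + 1) = (Finset.Ico n m).image (· + 1) := by
      rw [Finset.image_add_right_Ico]
    rw [h1, prod_WS_shift hd]

lemma blockWeight_nonneg {E : Matrix A A ℝ} (hE : ∀ a b, 0 ≤ E a b) {w : A → ℝ}
    (hw : ∀ a, 0 < w a) (n m : ℕ) (u : List (Fin d) → A) :
    0 ≤ blockWeight d E w n m u := by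
  rw [blockWeight_eq]
  refine mul_nonneg (Finset.prod_nonneg fun g _ => (hw _).le)
    (Finset.prod_nonneg fun g _ => Finset.prod_nonneg fun i _ => hE _ _)

end Main2

section Main3

variable {A : Type*} [Fintype A] [Inhabited A] {d : ℕ}

lemma treeX_nonempty {E : Matrix A A ℝ} (hE : AssumptionA E) :
    ∃ t, t ∈ treeX d E := by
  have hc : ∀ b : A, ∃ a, 0 < E a b := by
    intro b
    by_contra h
    push_neg at h
    have h2 : ∑ a, E a b ≤ 0 := Finset.sum_nonpos fun a _ => h a
    exact absurd (hE.2.1 b) (by linarith)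
  choose c hc using hc
  refine ⟨fun g => c^[g.length] default, fun g i => ?_⟩
  show 0 < E (c^[(g ++ [i]).length] default) (c^[g.length] default)
  have hlen : (g ++ [i]).length = g.length + 1 := by simp
  rw [hlen, Function.iterate_succ_apply']
  exact hc _

/-- The canonical block obtained by restricting `t`. -/
def blk (d : ℕ) [Inhabited A] (n m : ℕ) (t : List (Fin d) → A) : List (Fin d) → A :=
  fun g => if n ≤ g.length ∧ g.length ≤ m then t g else default

lemma blk_mem {E : Matrix A A ℝ} {t : List (Fin d) → A} (ht : t ∈ treeX d E) (n m : ℕ) :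
    blk d n m t ∈ blockSet d E n m :=
  ⟨t, ht, fun g h1 h2 => if_pos ⟨h1, h2⟩, fun g h => if_neg (by omega)⟩

lemma blockWeight_pos {E : Matrix A A ℝ} (hE : AssumptionA E) {w : A → ℝ}
    (hw : ∀ a, 0 < w a) {n m : ℕ} {u : List (Fin d) → A}
    (hu : u ∈ blockSet d E n m) :
    0 < blockWeight d E w n m u := by
  obtain ⟨t, ht, h1, _⟩ := hu
  rw [blockWeight_eq]
  refine mul_pos (Finset.prod_pos fun g _ => hw _)
    (Finset.prod_pos fun g hg => Finset.prod_pos fun i _ => ?_)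
  rw [mem_WS, Finset.mem_Ico] at hg
  rw [h1 g hg.1 (by omega), h1 (g ++ [i])
    (by simp only [List.length_append, List.length_cons, List.length_nil]; omega)
    (by simp only [List.length_append, List.length_cons, List.length_nil]; omega)]
  exact ht g i

lemma partFn_pos {E : Matrix A A ℝ} (hE : AssumptionA E) {w : A → ℝ}
    (hw : ∀ a, 0 < w a) (n m : ℕ) :
    0 < partFn d E w n m := by
  obtain ⟨t, ht⟩ := treeX_nonempty (d := d) hE
  rw [partFn_eq]
  refine Finset.sum_pos (fun u hu => blockWeight_pos hE hw ?_) ?_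
  · exact (Set.Finite.mem_toFinset _).1 hu
  · exact ⟨blk d n m t, (Set.Finite.mem_toFinset _).2 (blk_mem ht n m)⟩

lemma partFn_le (hd : 0 < d) {E : Matrix A A ℝ} (hE : AssumptionA E) {w : A → ℝ}
    (hw : ∀ a, 0 < w a) {n m : ℕ} (hnm : n ≤ m) :
    partFn d E w (n + 1) (m + 1) ≤ partFn d E w n m ^ d := by
  classical
  set B := (blockSet_finite (d := d) E n m).toFinset with hB
  set B' := (blockSet_finite (d := d) E (n + 1) (m + 1)).toFinset with hB'
  have hpow : partFn d E w n m ^ d =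
      ∑ p ∈ Fintype.piFinset (fun _ : Fin d => B), ∏ i : Fin d, blockWeight d E w n m (p i) := by
    rw [partFn_eq, ← Finset.prod_univ_sum]
    simp [Finset.prod_const, hB]
  rw [hpow, partFn_eq]
  calc ∑ u ∈ B', blockWeight d E w (n + 1) (m + 1) u
      = ∑ u ∈ B', ∏ i : Fin d, blockWeight d E w n m (subBlock d n m i u) :=
        Finset.sum_congr rfl fun u _ => blockWeight_subBlock hd E w hnm u
    _ = ∑ p ∈ B'.image (fun u (i : Fin d) => subBlock d n m i u),
          ∏ i : Fin d, blockWeight d E w n m (p i) := by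
        rw [Finset.sum_image]
        intro u hu v hv h
        exact subBlock_injOn ((Set.Finite.mem_toFinset _).1 hu)
          ((Set.Finite.mem_toFinset _).1 hv) (fun i => congrFun h i)
    _ ≤ _ := by
        refine Finset.sum_le_sum_of_subset_of_nonneg ?_ ?_
        · intro p hp
          rw [Finset.mem_image] at hp
          obtain ⟨u, hu, rfl⟩ := hp
          rw [Fintype.mem_piFinset]
          intro i
          exact (Set.Finite.mem_toFinset _).2
            (subBlock_mem ((Set.Finite.mem_toFinset _).1 hu) i)
        · intro p _ _
          exact Finset.prod_nonneg fun i _ => blockWeight_nonneg hE.1 hw n m (p i)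

lemma latCard_succ (hd : 2 ≤ d) (n k : ℕ) :
    latCard d (n + 1) (n + k + 1) = d * latCard d n (n + k) := by
  unfold latCard
  have h1 : Finset.Icc (n + 1) (n + k + 1) = (Finset.Icc n (n + k)).image (· + 1) := by
    rw [Finset.image_add_right_Icc]
  rw [h1, Finset.sum_image (by intro a _ b _ h; simp only at h; omega), Finset.mul_sum]
  refine Finset.sum_congr rfl fun i _ => ?_
  rw [pow_succ, mul_comm]

lemma latCard_pos (hd : 2 ≤ d) (n m : ℕ) (hnm : n ≤ m) : 0 < latCard d n m := by
  unfold latCard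
  refine Finset.sum_pos (fun i _ => pow_pos (by omega) i) ⟨n, Finset.mem_Icc.2 ⟨le_refl n, hnm⟩⟩

lemma card_identity (hd : 2 ≤ d) {n m : ℕ} (hnm : n ≤ m) :
    (WS d ({n} : Finset ℕ)).card + d * (WS d (Finset.Ico n m)).card = latCard d n m := by
  rw [card_WS hd, card_WS hd, Finset.sum_singleton]
  unfold latCard
  have h1 : Finset.Ico (n + 1) (m + 1) = (Finset.Ico n m).image (· + 1) := by
    rw [Finset.image_add_right_Ico]
  have h2 : d * ∑ i ∈ Finset.Ico n m, d ^ i = ∑ i ∈ Finset.Ico (n + 1) (m + 1), d ^ i := by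
    rw [h1, Finset.sum_image (by intro a _ b _ h; simp only at h; omega), Finset.mul_sum]
    exact Finset.sum_congr rfl fun i _ => by rw [pow_succ, mul_comm]
  rw [h2, ← Finset.Ico_add_one_right_eq_Icc, Finset.sum_eq_sum_Ico_succ_bot (by omega : n < m + 1)]

end Main3

section Main4

variable {A : Type*} [Fintype A] [Inhabited A] {d : ℕ}

lemma exists_c {E : Matrix A A ℝ} (hE : AssumptionA E) {w : A → ℝ} (hw : ∀ a, 0 < w a) :
    ∃ c : ℝ, 0 < c ∧ c ≤ 1 ∧ (∀ a, c ≤ w a) ∧ (∀ a b, 0 < E a b → c ≤ E a b) := by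
  have hA : (Finset.univ : Finset A).Nonempty := Finset.univ_nonempty
  have hA2 : (Finset.univ : Finset (A × A)).Nonempty := Finset.univ_nonempty
  set cw := Finset.univ.inf' hA w with hcw
  set cE := Finset.univ.inf' hA2 (fun p : A × A => if 0 < E p.1 p.2 then E p.1 p.2 else 1)
    with hcE
  refine ⟨min 1 (min cw cE), ?_, min_le_left _ _, ?_, ?_⟩
  · refine lt_min one_pos (lt_min ?_ ?_)
    · exact (Finset.lt_inf'_iff _).2 fun a _ => hw a
    · refine (Finset.lt_inf'_iff _).2 fun p _ => ?_
      split
      · assumption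
      · exact one_pos
  · intro a
    exact le_trans (min_le_right _ _) (le_trans (min_le_left _ _)
      (Finset.inf'_le _ (Finset.mem_univ a)))
  · intro a b hab
    refine le_trans (min_le_right _ _) (le_trans (min_le_right _ _) ?_)
    have := Finset.inf'_le (f := fun p : A × A => if 0 < E p.1 p.2 then E p.1 p.2 else 1)
      (Finset.mem_univ (a, b))
    rwa [if_pos hab] at this

lemma partFn_ge (hd : 2 ≤ d) {E : Matrix A A ℝ} (hE : AssumptionA E) {w : A → ℝ}
    (hw : ∀ a, 0 < w a) {c : ℝ} (hc : 0 < c) (hc1 : ∀ a, c ≤ w a)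
    (hc2 : ∀ a b, 0 < E a b → c ≤ E a b) {n m : ℕ} (hnm : n ≤ m) :
    c ^ latCard d n m ≤ partFn d E w n m := by
  obtain ⟨t, ht⟩ := treeX_nonempty (d := d) hE
  have hmem := blk_mem (d := d) ht n m
  have hle : blockWeight d E w n m (blk d n m t) ≤ partFn d E w n m := by
    rw [partFn_eq]
    exact Finset.single_le_sum
      (fun u _ => blockWeight_nonneg hE.1 hw n m u)
      ((Set.Finite.mem_toFinset _).2 hmem)
  refine le_trans ?_ hle
  rw [blockWeight_eq, ← card_identity hd hnm, pow_add]
  have h1 : c ^ (WS d ({n} : Finset ℕ)).card ≤ ∏ g ∈ WS d {n}, w (blk d n m t g) := by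
    rw [← Finset.prod_const]
    exact Finset.prod_le_prod (fun g _ => hc.le) (fun g _ => hc1 _)
  have h2 : c ^ (d * (WS d (Finset.Ico n m)).card) ≤
      ∏ g ∈ WS d (Finset.Ico n m), ∏ i : Fin d,
        E (blk d n m t (g ++ [i])) (blk d n m t g) := by
    rw [pow_mul, ← Finset.prod_const]
    refine Finset.prod_le_prod (fun g _ => pow_nonneg hc.le d) (fun g hg => ?_)
    rw [mem_WS, Finset.mem_Ico] at hg
    rw [← Fin.prod_const d c]
    refine Finset.prod_le_prod (fun i _ => hc.le) (fun i _ => ?_)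
    have e1 : blk d n m t g = t g := if_pos ⟨hg.1, by omega⟩
    have e2 : blk d n m t (g ++ [i]) = t (g ++ [i]) := if_pos
      (by simp only [List.length_append, List.length_cons, List.length_nil]; omega)
    rw [e1, e2]
    exact hc2 _ _ (ht g i)
  exact mul_le_mul h1 h2 (pow_nonneg hc.le _)
    (Finset.prod_nonneg fun g _ => (hw _).le)

end Main4

/-- `‖B_{n+1}^{n+k+1}‖_w ≤ (‖B_n^{n+k}‖_w)^d` and
`|Λ_{n+1}^{n+k+1}| = d·|Λ_n^{n+k}|`; consequently the sequence
`a_n = log ‖B_n^{n+k}‖_w / |Λ_n^{n+k}|` is non-increasing and converges. -/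
theorem stmt7 {A : Type*} [Fintype A] [Inhabited A] (d : ℕ) (hd : 2 ≤ d)
    (E : Matrix A A ℝ) (hE : AssumptionA E) (w : A → ℝ) (hw : ∀ a, 0 < w a) (k : ℕ) :
    (∀ n : ℕ, partFn d E w (n + 1) (n + k + 1) ≤ partFn d E w n (n + k) ^ d) ∧
    (∀ n : ℕ, latCard d (n + 1) (n + k + 1) = d * latCard d n (n + k)) ∧
    Antitone (fun n : ℕ =>
      Real.log (partFn d E w n (n + k)) / (latCard d n (n + k) : ℝ)) ∧
    ∃ L : ℝ, Tendsto (fun n : ℕ =>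
      Real.log (partFn d E w n (n + k)) / (latCard d n (n + k) : ℝ)) atTop (nhds L) := by
  have hd0 : 0 < d := by omega
  obtain ⟨c, hc, hc1, hcw, hcE⟩ := exists_c hE hw
  have hP : ∀ n : ℕ, partFn d E w (n + 1) (n + k + 1) ≤ partFn d E w n (n + k) ^ d :=
    fun n => partFn_le hd0 hE hw (Nat.le_add_right n k)
  have hL : ∀ n : ℕ, latCard d (n + 1) (n + k + 1) = d * latCard d n (n + k) :=
    fun n => latCard_succ hd n k
  have hanti : Antitone (fun n : ℕ =>
      Real.log (partFn d E w n (n + k)) / (latCard d n (n + k) : ℝ)) := by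
    apply antitone_nat_of_succ_le
    intro n
    have he : n + 1 + k = n + k + 1 := by omega
    rw [he, hL n]
    have hpos1 : (0:ℝ) < partFn d E w (n + 1) (n + k + 1) := partFn_pos hE hw _ _
    have hpos0 : (0:ℝ) < partFn d E w n (n + k) := partFn_pos hE hw _ _
    have hlog : Real.log (partFn d E w (n + 1) (n + k + 1)) ≤
        d * Real.log (partFn d E w n (n + k)) := by
      have := (Real.log_le_log_iff hpos1 (pow_pos hpos0 d)).2 (hP n)
      rwa [Real.log_pow] at this
    have hLpos : (0:ℝ) < (latCard d n (n + k) : ℝ) := by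
      exact_mod_cast latCard_pos hd n (n + k) (Nat.le_add_right n k)
    have hdLpos : (0:ℝ) < ((d * latCard d n (n + k) : ℕ) : ℝ) := by
      exact_mod_cast Nat.mul_pos hd0 (latCard_pos hd n (n + k) (Nat.le_add_right n k))
    calc Real.log (partFn d E w (n + 1) (n + k + 1)) / ((d * latCard d n (n + k) : ℕ) : ℝ)
        ≤ (d * Real.log (partFn d E w n (n + k))) / ((d * latCard d n (n + k) : ℕ) : ℝ) :=
          (div_le_div_iff_of_pos_right hdLpos).2 hlog
      _ = Real.log (partFn d E w n (n + k)) / (latCard d n (n + k) : ℝ) := by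
          push_cast
          rw [mul_div_mul_left _ _ (by exact_mod_cast hd0.ne' : (d:ℝ) ≠ 0)]
  have hbdd : ∀ n : ℕ,
      Real.log c ≤ Real.log (partFn d E w n (n + k)) / (latCard d n (n + k) : ℝ) := by
    intro n
    have hLpos : (0:ℝ) < (latCard d n (n + k) : ℝ) := by
      exact_mod_cast latCard_pos hd n (n + k) (Nat.le_add_right n k)
    have hge := partFn_ge hd hE hw hc hcw hcE (Nat.le_add_right n k)
    have hpos0 : (0:ℝ) < partFn d E w n (n + k) := partFn_pos hE hw _ _
    have hlog : (latCard d n (n + k) : ℝ) * Real.log c ≤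
        Real.log (partFn d E w n (n + k)) := by
      have := (Real.log_le_log_iff (pow_pos hc _) hpos0).2 hge
      rwa [Real.log_pow] at this
    have := (div_le_div_iff_of_pos_right hLpos).2 hlog
    rwa [mul_div_cancel_left₀ _ hLpos.ne'] at this
  refine ⟨hP, hL, hanti, _, tendsto_atTop_ciInf hanti ⟨Real.log c, ?_⟩⟩
  rintro x ⟨n, rfl⟩
  exact hbdd n
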